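/- Suppose that, as n → ∞, the random vector (T_1^n, ..., T_w^n) converges in distribution to a vector of w independent and identically distributed random variables each having an atomless (continuous) distribution, and that (T̂_1^n, ..., T̂_w^n) is another sequence of random vectors, defined on the same probability spaces, such that T̂_j^n − T_j^n converges to 0 in probability for each 1 ≤ j ≤ w. Then P(T̂_1^n > T̂^n_{[1−α]}) → ⌊αw⌋/w as n → ∞. -/

import Mathlib

open MeasureTheory ProbabilityTheory Filter
open scoped ENNReal NNReal

/-- The `k`-th smallest value (1-indexed) among `T 0, ..., T (w-1)`. -/
noncomputable def orderStat {w : ℕ} (T : Fin w → ℝ) (k : ℕ) : ℝ :=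
  if h : k - 1 < w then T (Tuple.sort T ⟨k - 1, h⟩) else 0

section OrderStat
variable {w : ℕ} {k : ℕ}

lemma orderStat_def (x : Fin w → ℝ) (hk1 : 1 ≤ k) (hkw : k ≤ w) :
    orderStat x k = x (Tuple.sort x ⟨k - 1, by omega⟩) := by
  rw [orderStat, dif_pos]

/-- count via sorted indices -/
lemma card_filter_sort (x : Fin w → ℝ) (p : ℝ → Prop) [DecidablePred p] :
    (Finset.univ.filter fun l => p (x (Tuple.sort x l))).card
      = (Finset.univ.filter fun i => p (x i)).card := by
  apply Finset.card_bij (fun l _ => Tuple.sort x l)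
  · intro l hl; simp only [Finset.mem_filter, Finset.mem_univ, true_and] at hl ⊢; exact hl
  · intro a ha b hb hab; exact (Tuple.sort x).injective hab
  · intro i hi
    refine ⟨(Tuple.sort x)⁻¹ i, ?_, by simp⟩
    simp only [Finset.mem_filter, Finset.mem_univ, true_and] at hi ⊢
    simpa using hi

lemma orderStat_le_iff (x : Fin w → ℝ) (hk1 : 1 ≤ k) (hkw : k ≤ w) (t : ℝ) :
    orderStat x k ≤ t ↔ k ≤ (Finset.univ.filter fun i => x i ≤ t).card := by
  classical
  rw [orderStat_def x hk1 hkw, ← card_filter_sort x (fun v => v ≤ t)]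
  set σ := Tuple.sort x with hσ
  have mono : Monotone (x ∘ σ) := Tuple.monotone_sort x
  set a : Fin w := ⟨k - 1, by omega⟩ with ha
  constructor
  · intro h
    have hsub : Finset.Iic a ⊆ Finset.univ.filter fun l => x (σ l) ≤ t := by
      intro l hl
      simp only [Finset.mem_Iic] at hl
      simp only [Finset.mem_filter, Finset.mem_univ, true_and]
      exact le_trans (mono hl) h
    calc k = (Finset.Iic a).card := by rw [Fin.card_Iic]; simp [ha]; omega
    _ ≤ _ := Finset.card_le_card hsub
  · intro h
    by_contra hlt
    push_neg at hlt
    have hsub : (Finset.univ.filter fun l => x (σ l) ≤ t) ⊆ Finset.Iio a := by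
      intro l hl
      simp only [Finset.mem_filter, Finset.mem_univ, true_and] at hl
      simp only [Finset.mem_Iio]
      by_contra hge
      push_neg at hge
      have := mono hge
      simp only [Function.comp_apply] at this
      linarith
    have := Finset.card_le_card hsub
    rw [Fin.card_Iio] at this
    simp only [ha] at this
    omega

lemma orderStat_lt_iff (x : Fin w → ℝ) (hk1 : 1 ≤ k) (hkw : k ≤ w) (t : ℝ) :
    orderStat x k < t ↔ k ≤ (Finset.univ.filter fun i => x i < t).card := by
  classical
  rw [orderStat_def x hk1 hkw, ← card_filter_sort x (fun v => v < t)]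
  set σ := Tuple.sort x with hσ
  have mono : Monotone (x ∘ σ) := Tuple.monotone_sort x
  set a : Fin w := ⟨k - 1, by omega⟩ with ha
  constructor
  · intro h
    have hsub : Finset.Iic a ⊆ Finset.univ.filter fun l => x (σ l) < t := by
      intro l hl
      simp only [Finset.mem_Iic] at hl
      simp only [Finset.mem_filter, Finset.mem_univ, true_and]
      exact lt_of_le_of_lt (mono hl) h
    calc k = (Finset.Iic a).card := by rw [Fin.card_Iic]; simp [ha]; omega
    _ ≤ _ := Finset.card_le_card hsub
  · intro h
    by_contra hlt
    push_neg at hlt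
    have hsub : (Finset.univ.filter fun l => x (σ l) < t) ⊆ Finset.Iio a := by
      intro l hl
      simp only [Finset.mem_filter, Finset.mem_univ, true_and] at hl
      simp only [Finset.mem_Iio]
      by_contra hge
      push_neg at hge
      have := mono hge
      simp only [Function.comp_apply] at this
      linarith
    have := Finset.card_le_card hsub
    rw [Fin.card_Iio] at this
    simp only [ha] at this
    omega
end OrderStat

section OrderStat2
variable {w k : ℕ}

lemma orderStat_sub_le (x y : Fin w → ℝ) (hk1 : 1 ≤ k) (hkw : k ≤ w) {d : ℝ}
    (hd : ∀ i, |x i - y i| ≤ d) : orderStat x k ≤ orderStat y k + d := by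
  classical
  rw [orderStat_le_iff x hk1 hkw]
  have h1 : k ≤ (Finset.univ.filter fun i => y i ≤ orderStat y k).card :=
    (orderStat_le_iff y hk1 hkw _).mp le_rfl
  refine le_trans h1 (Finset.card_le_card ?_)
  intro i hi
  simp only [Finset.mem_filter, Finset.mem_univ, true_and] at hi ⊢
  have := abs_le.mp (hd i)
  linarith [this.1, this.2]

lemma lipschitz_orderStat (hk1 : 1 ≤ k) (hkw : k ≤ w) :
    LipschitzWith 1 (fun x : Fin w → ℝ => orderStat x k) := by
  apply LipschitzWith.of_dist_le_mul
  intro x y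
  have : ((1 : ℝ≥0) : ℝ) * dist x y = dist x y := by norm_num
  rw [this, Real.dist_eq, abs_le]
  have hd : ∀ i, |x i - y i| ≤ dist x y := by
    intro i
    have := dist_le_pi_dist x y i
    rwa [Real.dist_eq] at this
  have hd' : ∀ i, |y i - x i| ≤ dist x y := by
    intro i; rw [abs_sub_comm]; exact hd i
  constructor
  · have := orderStat_sub_le y x hk1 hkw hd'
    linarith
  · have := orderStat_sub_le x y hk1 hkw hd
    linarith

lemma continuous_orderStat (hk1 : 1 ≤ k) (hkw : k ≤ w) :
    Continuous (fun x : Fin w → ℝ => orderStat x k) :=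
  (lipschitz_orderStat hk1 hkw).continuous

lemma orderStat_comp_perm (x : Fin w → ℝ) (τ : Equiv.Perm (Fin w)) (hk1 : 1 ≤ k) (hkw : k ≤ w) :
    orderStat (x ∘ τ) k = orderStat x k := by
  classical
  have key : ∀ t : ℝ, (Finset.univ.filter fun i => (x ∘ τ) i ≤ t).card
      = (Finset.univ.filter fun i => x i ≤ t).card := by
    intro t
    apply Finset.card_bij (fun l _ => τ l)
    · intro l hl; simp only [Finset.mem_filter, Finset.mem_univ, true_and,
        Function.comp_apply] at hl ⊢; exact hl
    · intro a _ b _ hab; exact τ.injective hab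
    · intro i hi
      refine ⟨τ⁻¹ i, ?_, by simp⟩
      simp only [Finset.mem_filter, Finset.mem_univ, true_and, Function.comp_apply] at hi ⊢
      simpa using hi
  have h1 : orderStat (x ∘ τ) k ≤ orderStat x k := by
    rw [orderStat_le_iff _ hk1 hkw, key]
    exact (orderStat_le_iff x hk1 hkw _).mp le_rfl
  have h2 : orderStat x k ≤ orderStat (x ∘ τ) k := by
    rw [orderStat_le_iff x hk1 hkw, ← key]
    exact (orderStat_le_iff _ hk1 hkw _).mp le_rfl
  exact le_antisymm h1 h2

/-- For injective tuples, exactly `w - k` coordinates exceed the `k`-th order statistic. -/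
lemma card_gt_orderStat (x : Fin w → ℝ) (hx : Function.Injective x)
    (hk1 : 1 ≤ k) (hkw : k ≤ w) :
    (Finset.univ.filter fun i => orderStat x k < x i).card = w - k := by
  classical
  set σ := Tuple.sort x with hσ
  have mono : Monotone (x ∘ σ) := Tuple.monotone_sort x
  have smono : StrictMono (x ∘ σ) := mono.strictMono_of_injective (hx.comp σ.injective)
  set a : Fin w := ⟨k - 1, by omega⟩ with ha
  have hos : orderStat x k = x (σ a) := orderStat_def x hk1 hkw
  have : (Finset.univ.filter fun i => orderStat x k < x i).card
      = (Finset.univ.filter fun l => orderStat x k < x (σ l)).card :=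
    (card_filter_sort x (fun v => orderStat x k < v)).symm
  rw [this]
  have hset : (Finset.univ.filter fun l => orderStat x k < x (σ l)) = Finset.Ioi a := by
    ext l
    simp only [Finset.mem_filter, Finset.mem_univ, true_and, Finset.mem_Ioi, hos]
    exact ⟨fun h => smono.lt_iff_lt.mp h, fun h => smono h⟩
  rw [hset, Fin.card_Ioi]
  simp only [ha]
  omega
end OrderStat2

section Frontier
variable {w k : ℕ} [NeZero w]

/-- the event whose probability we track -/
def AEvent (w k : ℕ) [NeZero w] : Set (Fin w → ℝ) := {x | orderStat x k < x 0}

lemma isOpen_AEvent (hk1 : 1 ≤ k) (hkw : k ≤ w) : IsOpen (AEvent w k) :=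
  isOpen_lt (continuous_orderStat hk1 hkw) (continuous_apply 0)

lemma frontier_AEvent_subset (hk1 : 1 ≤ k) (hkw : k ≤ w) :
    frontier (AEvent w k) ⊆ {x : Fin w → ℝ | ¬ Function.Injective x} := by
  classical
  intro x hx
  rw [(isOpen_AEvent (w := w) hk1 hkw).frontier_eq] at hx
  obtain ⟨hxc, hxA⟩ := hx
  intro hinj
  -- x 0 ≤ orderStat x k
  have hle : ¬ (k ≤ (Finset.univ.filter fun i => x i < x 0).card) := by
    intro h
    exact hxA ((orderStat_lt_iff x hk1 hkw (x 0)).mpr h)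
  set U : Set (Fin w → ℝ) := ⋂ i : Fin w, {y | x 0 < x i → y 0 < y i} with hU
  have hUopen : IsOpen U := by
    apply isOpen_iInter_of_finite
    intro i
    by_cases h : x 0 < x i
    · have : {y : Fin w → ℝ | x 0 < x i → y 0 < y i} = {y | y 0 < y i} := by
        ext y; simp [h]
      rw [this]
      exact isOpen_lt (continuous_apply 0) (continuous_apply i)
    · have : {y : Fin w → ℝ | x 0 < x i → y 0 < y i} = Set.univ := by
        ext y; simp [h]
      rw [this]; exact isOpen_univ
  have hxU : x ∈ U := by
    simp only [hU, Set.mem_iInter, Set.mem_setOf_eq]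
    exact fun i h => h
  have hdisj : U ∩ AEvent w k = ∅ := by
    ext y
    simp only [Set.mem_inter_iff, Set.mem_empty_iff_false, iff_false, not_and]
    intro hyU hyA
    have hcount : k ≤ (Finset.univ.filter fun i => y i < y 0).card :=
      (orderStat_lt_iff y hk1 hkw (y 0)).mp hyA
    have hsub : (Finset.univ.filter fun i => y i < y 0)
        ⊆ (Finset.univ.filter fun i => x i < x 0) := by
      intro i hi
      simp only [Finset.mem_filter, Finset.mem_univ, true_and] at hi ⊢
      rcases lt_trichotomy (x i) (x 0) with h | h | h
      · exact h
      · exact absurd (hinj h) (by rintro rfl; exact absurd hi (lt_irrefl _))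
      · have := Set.mem_iInter.mp hyU i
        simp only [Set.mem_setOf_eq] at this
        exact absurd (this h) (not_lt.mpr hi.le)
    exact hle (le_trans hcount (Finset.card_le_card hsub))
  obtain ⟨y, hy⟩ := mem_closure_iff.mp hxc U hUopen hxU
  exact Set.eq_empty_iff_forall_notMem.mp hdisj y hy
end Frontier

section MeasurePart
variable {w k : ℕ} [NeZero w] (m : Measure ℝ) [IsProbabilityMeasure m]

lemma map_pair_eq_prod {i j : Fin w} (hij : i ≠ j) :
    Measure.map (fun x : Fin w → ℝ => (x i, x j)) (Measure.pi fun _ : Fin w => m)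
      = m.prod m := by
  classical
  have hmeas : Measurable (fun x : Fin w → ℝ => (x i, x j)) :=
    (measurable_pi_apply i).prodMk (measurable_pi_apply j)
  refine (Measure.prod_eq fun s t hs ht => ?_).symm
  rw [Measure.map_apply hmeas (hs.prod ht)]
  have hpre : (fun x : Fin w → ℝ => (x i, x j)) ⁻¹' (s ×ˢ t)
      = Set.pi Set.univ (fun l => if l = i then s else if l = j then t else Set.univ) := by
    ext x
    simp only [Set.mem_preimage, Set.mem_prod, Set.mem_pi, Set.mem_univ, true_implies]
    constructor
    · rintro ⟨h1, h2⟩ l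
      by_cases hli : l = i
      · subst hli; simp [if_pos rfl, h1]
      · by_cases hlj : l = j
        · subst hlj; simp [hli, h2]
        · simp [hli, hlj]
    · intro h
      have h1 := h i
      have h2 := h j
      simp only [if_pos rfl] at h1
      rw [if_neg hij.symm, if_pos rfl] at h2
      exact ⟨h1, h2⟩
  rw [hpre, Measure.pi_pi]
  have : ∀ l : Fin w, (if l = i then s else if l = j then t else Set.univ) ∈
      ({s, t, Set.univ} : Set (Set ℝ)) := by intro l; split_ifs <;> simp
  rw [← Finset.prod_subset (Finset.subset_univ ({i, j} : Finset (Fin w)))]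
  · rw [Finset.prod_pair hij]
    simp [if_neg hij.symm]
  · intro l _ hl
    simp only [Finset.mem_insert, Finset.mem_singleton, not_or] at hl
    simp [hl.1, hl.2]

lemma null_eq_coord (hm_atomless : ∀ x : ℝ, m {x} = 0) {i j : Fin w} (hij : i ≠ j) :
    (Measure.pi fun _ : Fin w => m) {x | x i = x j} = 0 := by
  have hmeas : Measurable (fun x : Fin w → ℝ => (x i, x j)) :=
    (measurable_pi_apply i).prodMk (measurable_pi_apply j)
  have hdiag : MeasurableSet {p : ℝ × ℝ | p.1 = p.2} :=
    measurableSet_eq_fun measurable_fst measurable_snd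
  have h1 : (Measure.pi fun _ : Fin w => m) {x | x i = x j}
      = (m.prod m) {p : ℝ × ℝ | p.1 = p.2} := by
    rw [← map_pair_eq_prod m hij, Measure.map_apply hmeas hdiag]
    rfl
  rw [h1, Measure.prod_apply hdiag]
  have : ∀ a : ℝ, m (Prod.mk a ⁻¹' {p : ℝ × ℝ | p.1 = p.2}) = 0 := by
    intro a
    have : Prod.mk a ⁻¹' {p : ℝ × ℝ | p.1 = p.2} = {a} := by
      ext b; simp [eq_comm]
    rw [this]; exact hm_atomless a
  simp only [this]
  simp

lemma ties_null (hm_atomless : ∀ x : ℝ, m {x} = 0) :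
    (Measure.pi fun _ : Fin w => m) {x : Fin w → ℝ | ¬ Function.Injective x} = 0 := by
  have hsub : {x : Fin w → ℝ | ¬ Function.Injective x}
      ⊆ ⋃ i : Fin w, ⋃ j : Fin w, {x | i ≠ j ∧ x i = x j} := by
    intro x hx
    simp only [Set.mem_setOf_eq, Function.Injective] at hx
    push_neg at hx
    obtain ⟨i, j, hxij, hij⟩ := hx
    exact Set.mem_iUnion.mpr ⟨i, Set.mem_iUnion.mpr ⟨j, ⟨hij, hxij⟩⟩⟩
  apply measure_mono_null hsub
  · apply measure_iUnion_null
    intro i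
    apply measure_iUnion_null
    intro j
    by_cases hij : i = j
    · subst hij
      have : {x : Fin w → ℝ | i ≠ i ∧ x i = x i} = ∅ := by ext x; simp
      simp [this]
    · exact measure_mono_null (fun x hx => hx.2) (null_eq_coord m hm_atomless hij)

lemma perm_invariant (τ : Equiv.Perm (Fin w)) :
    Measure.map (fun x : Fin w → ℝ => x ∘ τ) (Measure.pi fun _ : Fin w => m)
      = Measure.pi fun _ : Fin w => m := by
  classical
  have hmeas : Measurable (fun x : Fin w → ℝ => x ∘ τ) :=
    measurable_pi_lambda _ fun i => measurable_pi_apply (τ i)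
  refine (Measure.pi_eq fun s hs => ?_).symm
  rw [Measure.map_apply hmeas (MeasurableSet.univ_pi hs)]
  have hpre : (fun x : Fin w → ℝ => x ∘ τ) ⁻¹' Set.pi Set.univ s
      = Set.pi Set.univ (fun i => s (τ⁻¹ i)) := by
    ext x
    simp only [Set.mem_preimage, Set.mem_pi, Set.mem_univ, true_implies, Function.comp_apply]
    constructor
    · intro h i
      have := h (τ⁻¹ i)
      simpa using this
    · intro h i
      have := h (τ i)
      simpa using this
  rw [hpre, Measure.pi_pi]
  exact Fintype.prod_equiv τ⁻¹ _ _ fun i => rfl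
end MeasurePart

section AEventMeasure
variable {w k : ℕ} [NeZero w] (m : Measure ℝ) [IsProbabilityMeasure m]

lemma measure_AEvent (hm_atomless : ∀ x : ℝ, m {x} = 0) (hk1 : 1 ≤ k) (hkw : k ≤ w) :
    (w : ℝ≥0∞) * (Measure.pi fun _ : Fin w => m) (AEvent w k) = ((w - k : ℕ) : ℝ≥0∞) := by
  classical
  set μ : Measure (Fin w → ℝ) := Measure.pi fun _ : Fin w => m with hμ
  set A : Fin w → Set (Fin w → ℝ) := fun i => {x | orderStat x k < x i} with hA
  have hAopen : ∀ i, IsOpen (A i) :=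
    fun i => isOpen_lt (continuous_orderStat hk1 hkw) (continuous_apply i)
  have hAmeas : ∀ i, MeasurableSet (A i) := fun i => (hAopen i).measurableSet
  -- all A i have the same measure
  have hsame : ∀ i : Fin w, μ (A i) = μ (A 0) := by
    intro i
    have hτ := perm_invariant (w := w) m (Equiv.swap 0 i)
    have hmeas : Measurable (fun x : Fin w → ℝ => x ∘ (Equiv.swap 0 i)) :=
      measurable_pi_lambda _ fun l => measurable_pi_apply _
    have h1 : μ (A 0) = μ ((fun x : Fin w → ℝ => x ∘ (Equiv.swap 0 i)) ⁻¹' (A 0)) := by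
      rw [← Measure.map_apply hmeas (hAmeas 0), hμ, hτ]
    have h2 : (fun x : Fin w → ℝ => x ∘ (Equiv.swap 0 i)) ⁻¹' (A 0) = A i := by
      ext x
      simp only [Set.mem_preimage, hA, Set.mem_setOf_eq, Function.comp_apply]
      rw [orderStat_comp_perm x _ hk1 hkw, Equiv.swap_apply_left]
    rw [h2] at h1
    exact h1.symm
  -- sum of the measures equals w - k
  have hsum : ∑ i : Fin w, μ (A i) = ((w - k : ℕ) : ℝ≥0∞) := by
    have h1 : ∀ i, μ (A i) = ∫⁻ x, (A i).indicator (fun _ => (1 : ℝ≥0∞)) x ∂μ := by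
      intro i
      rw [lintegral_indicator_const (hAmeas i), one_mul]
    rw [Finset.sum_congr rfl fun i _ => h1 i]
    rw [← lintegral_finset_sum _ fun i _ => (measurable_const.indicator (hAmeas i))]
    have hae : ∀ᵐ x ∂μ, (∑ i : Fin w, (A i).indicator (fun _ => (1 : ℝ≥0∞)) x)
        = ((w - k : ℕ) : ℝ≥0∞) := by
      have hties := ties_null (w := w) m hm_atomless
      rw [MeasureTheory.ae_iff]
      apply measure_mono_null _ hties
      intro x hx
      simp only [Set.mem_setOf_eq] at hx ⊢
      intro hinj
      apply hx
      have : ∀ i, (A i).indicator (fun _ => (1 : ℝ≥0∞)) x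
          = if orderStat x k < x i then 1 else 0 := by
        intro i; rw [Set.indicator_apply]; simp [hA]
      rw [Finset.sum_congr rfl fun i _ => this i, Finset.sum_boole,
        ← card_gt_orderStat x hinj hk1 hkw]
    rw [lintegral_congr_ae hae, lintegral_const]
    simp only [hμ]
    simp
  rw [Finset.sum_congr rfl fun i _ => hsame i, Finset.sum_const] at hsum
  simp only [Finset.card_univ, nsmul_eq_mul, Fintype.card_fin] at hsum
  exact hsum
end AEventMeasure

section ConvHelpers
open Metric

lemma ennreal_limsup_le {p a b : ℕ → ℝ≥0∞} (hpa : ∀ n, p n ≤ a n + b n)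
    (hb : Tendsto b atTop (nhds 0)) {c : ℝ≥0∞} (hc : c ≠ ∞) (ha : limsup a atTop ≤ c) :
    limsup p atTop ≤ c := by
  refine ENNReal.le_of_forall_pos_le_add fun ε hε _ => ?_
  have hev : ∀ᶠ n in atTop, b n < (ε : ℝ≥0∞) := hb.eventually_lt_const (by exact_mod_cast hε)
  have hle : ∀ᶠ n in atTop, p n ≤ a n + (ε : ℝ≥0∞) := by
    filter_upwards [hev] with n h
    exact (hpa n).trans (add_le_add_right h.le _)
  calc limsup p atTop ≤ limsup (fun n => a n + (ε : ℝ≥0∞)) atTop := limsup_le_limsup hle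
  _ = limsup a atTop + (ε : ℝ≥0∞) :=
      limsup_add_const atTop a _ (by isBoundedDefault) (by isBoundedDefault)
  _ ≤ c + ε := add_le_add_left ha _

lemma ennreal_le_liminf {p b v : ℕ → ℝ≥0∞} (hv : ∀ n, v n ≤ p n + b n)
    (hb : Tendsto b atTop (nhds 0)) (hp : ∀ n, p n ≤ 1)
    {c : ℝ≥0∞} (hc : c ≤ liminf v atTop) : c ≤ liminf p atTop := by
  have hfin : liminf p atTop ≠ ∞ := by
    have : liminf p atTop ≤ 1 := by
      apply liminf_le_of_le (by isBoundedDefault)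
      intro d hd
      obtain ⟨n, hn⟩ := hd.exists
      exact hn.trans (hp n)
    exact (this.trans_lt (by norm_num)).ne
  refine ENNReal.le_of_forall_pos_le_add fun ε hε _ => ?_
  have hev : ∀ᶠ n in atTop, b n < (ε : ℝ≥0∞) := hb.eventually_lt_const (by exact_mod_cast hε)
  have hle : ∀ᶠ n in atTop, v n ≤ p n + (ε : ℝ≥0∞) := by
    filter_upwards [hev] with n h
    exact (hv n).trans (add_le_add_right h.le _)
  calc c ≤ liminf v atTop := hc
  _ ≤ liminf (fun n => p n + (ε : ℝ≥0∞)) atTop := liminf_le_liminf hle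
  _ = liminf p atTop + ε :=
      liminf_add_const atTop p _ (by isBoundedDefault) (by isBoundedDefault)

/-- Slutsky + portmanteau: probabilities of a null-frontier open event converge. -/
lemma prob_tendsto_of_slutsky
    {Ω : Type*} [MeasureSpace Ω] [IsProbabilityMeasure (ℙ : Measure Ω)]
    {w : ℕ} [NeZero w]
    (T That : ℕ → Ω → Fin w → ℝ)
    (hT_meas : ∀ n, Measurable (T n)) (hThat_meas : ∀ n, Measurable (That n))
    (μ : Measure (Fin w → ℝ)) [IsProbabilityMeasure μ]
    (hconv : ∀ f : BoundedContinuousFunction (Fin w → ℝ) ℝ,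
      Tendsto (fun n => ∫ ω, f (T n ω)) atTop (nhds (∫ x, f x ∂μ)))
    (hdist : ∀ ε : ℝ, 0 < ε →
      Tendsto (fun n => ℙ {ω | ε ≤ dist (That n ω) (T n ω)}) atTop (nhds 0))
    (A : Set (Fin w → ℝ)) (hA : IsOpen A) (hfront : μ (frontier A) = 0) :
    Tendsto (fun n => ℙ (That n ⁻¹' A)) atTop (nhds (μ A)) := by
  set ν : ProbabilityMeasure (Fin w → ℝ) := ⟨μ, inferInstance⟩ with hν
  set νs : ℕ → ProbabilityMeasure (Fin w → ℝ) :=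
    fun n => ⟨Measure.map (T n) ℙ, Measure.isProbabilityMeasure_map (hT_meas n).aemeasurable⟩ with hνs
  have hνconv : Tendsto νs atTop (nhds ν) := by
    rw [MeasureTheory.ProbabilityMeasure.tendsto_iff_forall_integral_tendsto]
    intro f
    have : ∀ n, ∫ x, f x ∂(νs n : Measure (Fin w → ℝ)) = ∫ ω, f (T n ω) ∂ℙ := by
      intro n
      exact integral_map (hT_meas n).aemeasurable f.continuous.aestronglyMeasurable
    simp_rw [this]
    exact hconv f
  set p : ℕ → ℝ≥0∞ := fun n => ℙ (That n ⁻¹' A) with hp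
  set b : ℕ → ℝ → ℝ≥0∞ := fun n ε => ℙ {ω | ε ≤ dist (That n ω) (T n ω)} with hb
  -- upper bound
  have hupper : ∀ ε : ℝ, 0 < ε → limsup p atTop ≤ μ (cthickening ε A) := by
    intro ε hε
    have hsub : ∀ n, (That n ⁻¹' A)
        ⊆ (T n ⁻¹' cthickening ε A) ∪ {ω | ε ≤ dist (That n ω) (T n ω)} := by
      intro n ω hω
      by_cases hdd : ε ≤ dist (That n ω) (T n ω)
      · exact Or.inr hdd
      · push_neg at hdd
        refine Or.inl ?_
        exact mem_cthickening_of_dist_le (T n ω) (That n ω) ε A hω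
          (by rw [dist_comm]; exact hdd.le)
    have hpa : ∀ n, p n ≤ ℙ (T n ⁻¹' cthickening ε A) + b n ε := by
      intro n
      exact (measure_mono (hsub n)).trans (measure_union_le _ _)
    refine ennreal_limsup_le hpa (hdist ε hε) (measure_ne_top μ _) ?_
    have hmap : ∀ n, ℙ (T n ⁻¹' cthickening ε A) = (νs n : Measure (Fin w → ℝ)) (cthickening ε A) := by
      intro n
      show _ = (Measure.map (T n) ℙ) (cthickening ε A)
      rw [Measure.map_apply (hT_meas n) isClosed_cthickening.measurableSet]
    simp_rw [hmap]
    exact ProbabilityMeasure.limsup_measure_closed_le_of_tendsto hνconv isClosed_cthickening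
  have hlimsup : limsup p atTop ≤ μ A := by
    have htend : Tendsto (fun ε => μ (cthickening ε A)) (nhdsWithin 0 (Set.Ioi 0))
        (nhds (μ (closure A))) :=
      (tendsto_measure_cthickening ⟨1, by norm_num, measure_ne_top μ _⟩).mono_left
        nhdsWithin_le_nhds
    have hev : ∀ᶠ ε in nhdsWithin (0:ℝ) (Set.Ioi 0), limsup p atTop ≤ μ (cthickening ε A) := by
      filter_upwards [self_mem_nhdsWithin] with ε hε
      exact hupper ε hε
    have h1 : limsup p atTop ≤ μ (closure A) := ge_of_tendsto htend hev
    refine h1.trans ?_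
    have h2 : closure A ⊆ A ∪ frontier A := by
      rw [← closure_eq_self_union_frontier]
    refine (measure_mono h2).trans ?_
    refine (measure_union_le _ _).trans ?_
    rw [hfront, add_zero]
  -- lower bound
  have hlower : μ A ≤ liminf p atTop := by
    have hVle : ∀ ε : ℝ, 0 < ε → μ ((cthickening ε Aᶜ)ᶜ) ≤ liminf p atTop := by
      intro ε hε
      set V : Set (Fin w → ℝ) := (cthickening ε Aᶜ)ᶜ with hV
      have hVopen : IsOpen V := isClosed_cthickening.isOpen_compl
      have hsub : ∀ n, (T n ⁻¹' V)
          ⊆ (That n ⁻¹' A) ∪ {ω | ε ≤ dist (That n ω) (T n ω)} := by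
        intro n ω hω
        by_cases hdd : ε ≤ dist (That n ω) (T n ω)
        · exact Or.inr hdd
        · push_neg at hdd
          refine Or.inl ?_
          by_contra hAc
          exact hω (mem_cthickening_of_dist_le (T n ω) (That n ω) ε Aᶜ hAc
            (by rw [dist_comm]; exact hdd.le))
      have hv : ∀ n, ℙ (T n ⁻¹' V) ≤ p n + b n ε := by
        intro n
        exact (measure_mono (hsub n)).trans (measure_union_le _ _)
      refine ennreal_le_liminf hv (hdist ε hε) (fun n => prob_le_one) ?_
      have hmap : ∀ n, ℙ (T n ⁻¹' V) = (νs n : Measure (Fin w → ℝ)) V := by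
        intro n
        show _ = (Measure.map (T n) ℙ) V
        rw [Measure.map_apply (hT_meas n) hVopen.measurableSet]
      calc μ V ≤ liminf (fun n => (νs n : Measure (Fin w → ℝ)) V) atTop :=
        ProbabilityMeasure.le_liminf_measure_open_of_tendsto hνconv hVopen
      _ = liminf (fun n => ℙ (T n ⁻¹' V)) atTop := by simp_rw [hmap]
    -- μ V ε → μ A as ε → 0⁺
    have hcompl : ∀ ε : ℝ, μ ((cthickening ε Aᶜ)ᶜ) = 1 - μ (cthickening ε Aᶜ) := by
      intro ε
      rw [measure_compl isClosed_cthickening.measurableSet (measure_ne_top μ _), measure_univ]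
    have htend2 : Tendsto (fun ε => μ ((cthickening ε Aᶜ)ᶜ)) (nhdsWithin 0 (Set.Ioi 0))
        (nhds (μ A)) := by
      have h1 : Tendsto (fun ε => μ (cthickening ε Aᶜ)) (nhdsWithin 0 (Set.Ioi 0))
          (nhds (μ Aᶜ)) := by
        have := (tendsto_measure_cthickening (s := Aᶜ) ⟨1, by norm_num, measure_ne_top μ _⟩)
        rw [hA.isClosed_compl.closure_eq] at this
        exact this.mono_left nhdsWithin_le_nhds
      have h2 : Tendsto (fun ε => (1 : ℝ≥0∞) - μ (cthickening ε Aᶜ)) (nhdsWithin 0 (Set.Ioi 0))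
          (nhds (1 - μ Aᶜ)) :=
        ENNReal.Tendsto.sub tendsto_const_nhds h1 (Or.inl (by norm_num))
      have h3 : (1 : ℝ≥0∞) - μ Aᶜ = μ A := by
        rw [measure_compl hA.measurableSet (measure_ne_top μ _), measure_univ]
        exact ENNReal.sub_sub_cancel (by norm_num) prob_le_one
      rw [← h3]
      simp_rw [hcompl]
      exact h2
    refine le_of_tendsto htend2 ?_
    filter_upwards [self_mem_nhdsWithin] with ε hε
    exact hVle ε hε
  exact tendsto_of_le_liminf_of_limsup_le hlower hlimsup
end ConvHelpers

/-- Convergence in distribution (weak convergence of laws). -/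
def ConvInDist {Ω E : Type*} [MeasureSpace Ω] [TopologicalSpace E] [MeasurableSpace E]
    (X : ℕ → Ω → E) (μ : Measure E) : Prop :=
  ∀ f : BoundedContinuousFunction E ℝ,
    Tendsto (fun n => ∫ ω, f (X n ω)) atTop (nhds (∫ x, f x ∂μ))

/-- If `(T_1^n, ..., T_w^n)` converges in distribution to a vector of i.i.d. variables
with a common atomless law, and `T̂_j^n - T_j^n → 0` in probability for each `j`, then
`P(T̂_1^n > T̂^n_{[1-α]}) → ⌊αw⌋/w`. -/
theorem statement12
    {Ω : Type*} [MeasureSpace Ω] [IsProbabilityMeasure (ℙ : Measure Ω)]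
    (w : ℕ) [NeZero w] (hw : 2 ≤ w) (α : ℝ) (hα : α ∈ Set.Ico (0 : ℝ) 1)
    (T That : ℕ → Ω → Fin w → ℝ)
    (hT_meas : ∀ n, Measurable (T n)) (hThat_meas : ∀ n, Measurable (That n))
    (m : Measure ℝ) [IsProbabilityMeasure m]
    (hm_atomless : ∀ x : ℝ, m {x} = 0)
    (hconv : ConvInDist T (Measure.pi fun _ : Fin w => m))
    (hclose : ∀ j : Fin w,
      TendstoInMeasure ℙ (fun n ω => That n ω j - T n ω j) atTop (fun _ => 0)) :
    Tendsto (fun n =>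
        (ℙ {ω | That n ω 0 > orderStat (That n ω) ⌈(1 - α) * (w : ℝ)⌉₊}).toReal)
      atTop (nhds ((⌊α * (w : ℝ)⌋ : ℝ) / w)) := by
  obtain ⟨hα0, hα1⟩ := hα
  have hw0 : 0 < w := Nat.pos_of_ne_zero (NeZero.ne w)
  have hw0R : (0 : ℝ) < w := by exact_mod_cast hw0
  set k : ℕ := ⌈(1 - α) * (w : ℝ)⌉₊ with hk
  have hk1 : 1 ≤ k := Nat.ceil_pos.mpr (by nlinarith)
  have hkw : k ≤ w := Nat.ceil_le.mpr (by nlinarith)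
  set μ : Measure (Fin w → ℝ) := Measure.pi fun _ : Fin w => m with hμ
  have hfront : μ (frontier (AEvent w k)) = 0 :=
    measure_mono_null (frontier_AEvent_subset hk1 hkw) (ties_null m hm_atomless)
  -- distance in probability
  have hdist : ∀ ε : ℝ, 0 < ε →
      Tendsto (fun n => ℙ {ω | ε ≤ dist (That n ω) (T n ω)}) atTop (nhds 0) := by
    intro ε hε
    have h0 : ∀ j : Fin w,
        Tendsto (fun n => ℙ {ω | ε ≤ dist (That n ω j) (T n ω j)}) atTop (nhds 0) := by
      intro j
      have h := hclose j (ENNReal.ofReal ε) (ENNReal.ofReal_pos.mpr hε)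
      have heq : ∀ n, {ω | ENNReal.ofReal ε ≤ edist ((fun ω => That n ω j - T n ω j) ω) ((fun _ => (0:ℝ)) ω)}
          = {ω | ε ≤ dist (That n ω j) (T n ω j)} := by
        intro n; ext ω; simp only [Set.mem_setOf_eq, edist_dist]
        rw [ENNReal.ofReal_le_ofReal_iff dist_nonneg]; simp [Real.dist_eq]
      simpa only [heq] using h
    have hsum : Tendsto (fun n => ∑ j : Fin w, ℙ {ω | ε ≤ dist (That n ω j) (T n ω j)})
        atTop (nhds 0) := by
      have := tendsto_finset_sum (Finset.univ : Finset (Fin w)) (fun j _ => h0 j)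
      simpa using this
    apply tendsto_of_tendsto_of_tendsto_of_le_of_le tendsto_const_nhds hsum
      (fun n => zero_le)
    intro n
    have hsub : {ω | ε ≤ dist (That n ω) (T n ω)}
        ⊆ ⋃ j : Fin w, {ω | ε ≤ dist (That n ω j) (T n ω j)} := by
      intro ω hω
      simp only [Set.mem_setOf_eq] at hω
      by_contra hc
      simp only [Set.mem_iUnion, Set.mem_setOf_eq, not_exists, not_le] at hc
      exact absurd ((dist_pi_lt_iff hε).mpr hc) (not_lt.mpr hω)
    exact (measure_mono hsub).trans (measure_iUnion_fintype_le _ _)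
  -- main convergence
  have hmain : Tendsto (fun n => ℙ (That n ⁻¹' AEvent w k)) atTop (nhds (μ (AEvent w k))) :=
    prob_tendsto_of_slutsky T That hT_meas hThat_meas μ hconv hdist _
      (isOpen_AEvent hk1 hkw) hfront
  have htoReal : Tendsto (fun n => (ℙ (That n ⁻¹' AEvent w k)).toReal) atTop
      (nhds ((μ (AEvent w k)).toReal)) :=
    (ENNReal.tendsto_toReal (measure_ne_top μ _)).comp hmain
  -- identify the value
  have hval : (μ (AEvent w k)).toReal = ((w - k : ℕ) : ℝ) / (w : ℝ) := by
    have hmeq := measure_AEvent (w := w) (k := k) m hm_atomless hk1 hkw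
    rw [← hμ] at hmeq
    have hwne : ((w : ℝ≥0∞)) ≠ 0 := by exact_mod_cast (Nat.cast_ne_zero (R := ℝ≥0∞)).mpr hw0.ne'
    have hμA : μ (AEvent w k) = ((w - k : ℕ) : ℝ≥0∞) / (w : ℝ≥0∞) := by
      rw [← hmeq, mul_comm, mul_div_assoc, ENNReal.div_self hwne (by simp), mul_one]
    rw [hμA, ENNReal.toReal_div, ENNReal.toReal_natCast, ENNReal.toReal_natCast]
  -- arithmetic : (w - k : ℕ) = ⌊α * w⌋
  have harith : ((w - k : ℕ) : ℝ) = ((⌊α * (w : ℝ)⌋ : ℤ) : ℝ) := by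
    have hz : (k : ℤ) = (w : ℤ) - ⌊α * (w : ℝ)⌋ := by
      have h1 : (k : ℤ) = ⌈(1 - α) * (w : ℝ)⌉ := Int.natCast_ceil_eq_ceil (by nlinarith)
      have h2 : (1 - α) * (w : ℝ) = -(α * (w : ℝ)) + ((w : ℤ) : ℝ) := by push_cast; ring
      rw [h1, h2, Int.ceil_add_intCast, Int.ceil_neg]
      ring
    have hfl0 : 0 ≤ ⌊α * (w : ℝ)⌋ := Int.floor_nonneg.mpr (by positivity)
    have hflw : ⌊α * (w : ℝ)⌋ ≤ (w : ℤ) := by omega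
    rw [Nat.cast_sub hkw]
    have hkR : (k : ℝ) = (w : ℝ) - ((⌊α * (w : ℝ)⌋ : ℤ) : ℝ) := by exact_mod_cast hz
    linarith
  rw [hval, harith] at htoReal
  exact htoReal
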